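/- For an additive Gaussian noise model, the j-th component of the score s(x) = ∇ log p(x) equals s_j(x) = -(x_j - f_j(pa_j(x)))/σ_j² + Σ_{i ∈ children(j)} (∂f_i/∂x_j)(pa_i(x)) · (x_i - f_i(pa_i(x)))/σ_i². -/

import Mathlib

/-- score components of an additive Gaussian noise model. -/
theorem score_additive_gaussian {d : ℕ}
    (pa : Fin d → Finset (Fin d)) (f : Fin d → (Fin d → ℝ) → ℝ)
    (σ : Fin d → ℝ) (hσ : ∀ i, 0 < σ i)
    (hnotself : ∀ i, i ∉ pa i)
    (hdep : ∀ i, ∀ x y : Fin d → ℝ, (∀ k ∈ pa i, x k = y k) → f i x = f i y)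
    (hdiff : ∀ i, Differentiable ℝ (f i))
    (L : (Fin d → ℝ) → ℝ)
    (hL : ∀ x, L x = -(1 / 2) * ∑ i, ((x i - f i x) / σ i) ^ 2
        - (1 / 2) * ∑ i, Real.log (2 * Real.pi * σ i ^ 2))
    (j : Fin d) (x : Fin d → ℝ) :
    fderiv ℝ L x (Pi.single j 1) =
      -((x j - f j x) / σ j ^ 2)
      + ∑ i ∈ Finset.univ.filter (fun i => j ∈ pa i),
          fderiv ℝ (f i) x (Pi.single j 1) * ((x i - f i x) / σ i ^ 2) := by
  classical
  set e : Fin d → ℝ := Pi.single j 1 with he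
  -- directions outside the parents give zero derivative
  have hDf0 : ∀ i, j ∉ pa i → fderiv ℝ (f i) x e = 0 := by
    intro i hji
    have hc : HasDerivAt (fun t : ℝ => x + t • e) e 0 := by
      simpa using ((hasDerivAt_id (0 : ℝ)).smul_const e).const_add x
    have hfd : HasFDerivAt (f i) (fderiv ℝ (f i) x) ((fun t : ℝ => x + t • e) 0) := by
      simpa using (hdiff i).differentiableAt.hasFDerivAt (x := x)
    have h1 : HasDerivAt (fun t : ℝ => f i (x + t • e)) (fderiv ℝ (f i) x e) 0 := by
      exact hfd.comp_hasDerivAt 0 hc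
    have hconst : (fun t : ℝ => f i (x + t • e)) = fun _ => f i x := by
      funext t
      refine hdep i _ _ (fun k hk => ?_)
      have hkj : k ≠ j := fun h => hji (h ▸ hk)
      simp [he, Pi.single_apply, hkj]
    rw [hconst] at h1
    exact (h1.unique (hasDerivAt_const 0 _))
  -- derivative of each summand
  have hde : ∀ i, HasFDerivAt (fun y : Fin d → ℝ => (y i - f i y) / σ i)
      ((σ i)⁻¹ • (ContinuousLinearMap.proj i - fderiv ℝ (f i) x)) x := by
    intro i
    have h1 : HasFDerivAt (fun y : Fin d → ℝ => y i - f i y)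
        (ContinuousLinearMap.proj i - fderiv ℝ (f i) x) x :=
      (hasFDerivAt_apply i x).sub ((hdiff i).differentiableAt.hasFDerivAt)
    simpa [div_eq_inv_mul] using h1.const_mul (σ i)⁻¹
  have hsq : ∀ i, HasFDerivAt (fun y : Fin d → ℝ => ((y i - f i y) / σ i) ^ 2)
      ((2 * ((x i - f i x) / σ i)) •
        ((σ i)⁻¹ • (ContinuousLinearMap.proj i - fderiv ℝ (f i) x))) x := by
    intro i
    have h2 := (hde i).fun_mul (hde i)
    have h3 : (2 * ((x i - f i x) / σ i)) •
        ((σ i)⁻¹ • (ContinuousLinearMap.proj i - fderiv ℝ (f i) x))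
        = ((x i - f i x) / σ i) • ((σ i)⁻¹ • (ContinuousLinearMap.proj i - fderiv ℝ (f i) x))
          + ((x i - f i x) / σ i) • ((σ i)⁻¹ • (ContinuousLinearMap.proj i - fderiv ℝ (f i) x)) := by
      rw [two_mul, add_smul]
    rw [h3]
    simpa [pow_two] using h2
  have hsum := HasFDerivAt.fun_sum (u := Finset.univ)
    (fun i _ => hsq i)
  have hmain : HasFDerivAt
      (fun y : Fin d → ℝ => -(1 / 2 : ℝ) * ∑ i, ((y i - f i y) / σ i) ^ 2
        - (1 / 2) * ∑ i, Real.log (2 * Real.pi * σ i ^ 2))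
      ((-(1 / 2 : ℝ)) • ∑ i, (2 * ((x i - f i x) / σ i)) •
        ((σ i)⁻¹ • (ContinuousLinearMap.proj i - fderiv ℝ (f i) x))) x :=
    (hsum.const_mul _).sub_const _
  have hLfun : L = fun y : Fin d → ℝ => -(1 / 2 : ℝ) * ∑ i, ((y i - f i y) / σ i) ^ 2
      - (1 / 2) * ∑ i, Real.log (2 * Real.pi * σ i ^ 2) := funext hL
  rw [hLfun, hmain.fderiv]
  -- evaluate the continuous linear map at e
  simp only [ContinuousLinearMap.smul_apply, ContinuousLinearMap.coe_sum',
    Finset.sum_apply, ContinuousLinearMap.sub_apply, ContinuousLinearMap.proj_apply,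
    smul_eq_mul]
  rw [Finset.mul_sum]
  rw [← Finset.sum_filter_add_sum_filter_not Finset.univ (fun i => j ∈ pa i)]
  have hσne : ∀ i, σ i ≠ 0 := fun i => (hσ i).ne'
  have hA : ∑ i ∈ Finset.univ.filter (fun i => j ∈ pa i),
      -(1 / 2 : ℝ) * (2 * ((x i - f i x) / σ i) * ((σ i)⁻¹ * (e i - fderiv ℝ (f i) x e)))
      = ∑ i ∈ Finset.univ.filter (fun i => j ∈ pa i),
          fderiv ℝ (f i) x e * ((x i - f i x) / σ i ^ 2) := by
    refine Finset.sum_congr rfl fun i hi => ?_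
    have hji : j ∈ pa i := (Finset.mem_filter.mp hi).2
    have hij : i ≠ j := fun h => hnotself i (h ▸ hji)
    have hei : e i = 0 := by simp [he, Pi.single_apply, hij]
    rw [hei]
    field_simp
    ring
  have hB : ∑ i ∈ Finset.univ.filter (fun i => ¬ j ∈ pa i),
      -(1 / 2 : ℝ) * (2 * ((x i - f i x) / σ i) * ((σ i)⁻¹ * (e i - fderiv ℝ (f i) x e)))
      = -((x j - f j x) / σ j ^ 2) := by
    rw [Finset.sum_eq_single j]
    · have hej : e j = 1 := by simp [he]
      rw [hej, hDf0 j (hnotself j)]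
      field_simp
      ring
    · intro i hi hij
      have hji : j ∉ pa i := by simpa using (Finset.mem_filter.mp hi).2
      have hei : e i = 0 := by simp [he, Pi.single_apply, hij]
      rw [hei, hDf0 i hji]; ring
    · intro h
      exact absurd (Finset.mem_filter.mpr ⟨Finset.mem_univ j, hnotself j⟩) h
  rw [hA, hB, add_comm]
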